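/- Let β > 0, τ ≥ 0, λ > 0, and let (ζ₁, μ₁) be a principal eigenpair of the clamped operator β∂x⁴ − τ∂x² on (-1,1). Let γ > 0 satisfy γ² ≤ 1/(4μ₁). Then for every pair of continuous functions u⁰, u¹ : [-1,1] → ℝ there exists c₀ ≥ 0, depending only on γ, μ₁, ζ₁, u⁰ and u¹, with the following property: for any T ∈ (0,∞] and any u : [0,T) × [-1,1] → ℝ whose partial derivatives ∂t^j ∂x^k u for j ≤ 2, k ≤ 4 exist and are jointly continuous, with u(0,·) = u⁰, ∂t u(0,·) = u¹, u(t,±1) = ∂x u(t,±1) = 0, u(t,x) > -1 for all (t,x), and γ² ∂t² u + ∂t u + β ∂x⁴ u − τ ∂x² u = − λ G on [0,T) × (-1,1) for some continuous nonnegative G, one has ∫_{-1}^{1} ζ₁(x) |u(t,x)| dx ≤ c₀ for all t ∈ [0,T). -/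

import Mathlib

open MeasureTheory Set
open scoped ENNReal

/-- A principal eigenpair `(ζ, μ)` of the clamped operator `β ∂x⁴ - τ ∂x²` on `(-1,1)`:
`μ > 0` and `ζ` is a C⁴ function with clamped boundary conditions, positive on `(-1,1)`,
normalized in `L¹`, satisfying `β ζ'''' - τ ζ'' = μ ζ`. -/
def IsPrincipalEigenpair (β τ : ℝ) (ζ : ℝ → ℝ) (μ : ℝ) : Prop :=
  0 < μ ∧ ContDiff ℝ 4 ζ ∧
    ζ (-1) = 0 ∧ ζ 1 = 0 ∧ deriv ζ (-1) = 0 ∧ deriv ζ 1 = 0 ∧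
    (∀ x ∈ Ioo (-1 : ℝ) 1, 0 < ζ x) ∧
    (∫ x in (-1 : ℝ)..1, ζ x) = 1 ∧
    ∀ x ∈ Ioo (-1 : ℝ) 1,
      β * iteratedDeriv 4 ζ x - τ * iteratedDeriv 2 ζ x = μ * ζ x


/-- Differentiation under the interval integral for jointly continuous integrand/derivative. -/
lemma param_hasDerivAt
    (F F' : ℝ → ℝ → ℝ) (a b : ℝ)
    (hF : Continuous fun p : ℝ × ℝ => F p.1 p.2)
    (hF' : Continuous fun p : ℝ × ℝ => F' p.1 p.2)
    (hd : ∀ s x, HasDerivAt (fun s' => F s' x) (F' s x) s) (t : ℝ) :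
    HasDerivAt (fun s => ∫ x in a..b, F s x) (∫ x in a..b, F' t x) t := by
  obtain ⟨M, hM⟩ : ∃ M, ∀ p ∈ (Icc (t-1) (t+1)) ×ˢ (uIcc a b), ‖F' p.1 p.2‖ ≤ M :=
    (isCompact_Icc.prod isCompact_uIcc).exists_bound_of_continuousOn hF'.continuousOn
  have hcF : ∀ s, Continuous fun x => F s x := fun s =>
    hF.comp (continuous_const.prodMk continuous_id)
  have hcF' : ∀ s, Continuous fun x => F' s x := fun s =>
    hF'.comp (continuous_const.prodMk continuous_id)
  have := (intervalIntegral.hasDerivAt_integral_of_dominated_loc_of_deriv_le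
    (F := F) (F' := F') (x₀ := t) (bound := fun _ => M) (a := a) (b := b) (μ := volume)
    (s := Metric.ball t 1) (Metric.ball_mem_nhds t one_pos)
    (Filter.Eventually.of_forall fun s => (hcF s).aestronglyMeasurable)
    ((hcF t).intervalIntegrable a b)
    ((hcF' t).aestronglyMeasurable)
    (Filter.Eventually.of_forall ?_)
    (intervalIntegrable_const)
    (Filter.Eventually.of_forall fun x _ s _ => hd s x)).2
  · exact this
  · intro x hx s hs
    have hs' : s ∈ Icc (t-1) (t+1) := by
      rw [Real.ball_eq_Ioo] at hs
      exact Ioo_subset_Icc_self hs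
    exact hM (s, x) ⟨hs', uIoc_subset_uIcc hx⟩

/-- Exponential comparison: if `f' ≤ r f` on `[0,t]` with `r ≤ 0`, then `f t ≤ max (f 0) 0`. -/
lemma decay_bound (r : ℝ) (hr : r ≤ 0) (f f' : ℝ → ℝ) (t : ℝ) (ht : 0 ≤ t)
    (hf : ∀ s, HasDerivAt f (f' s) s)
    (hle : ∀ s ∈ Icc (0:ℝ) t, f' s ≤ r * f s) :
    f t ≤ max (f 0) 0 := by
  set g : ℝ → ℝ := fun s => f s * Real.exp (-(r * s)) with hg
  have hfc : Continuous f := by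
    rw [continuous_iff_continuousAt]; exact fun x => (hf x).continuousAt
  have hg' : ∀ s, HasDerivAt g ((f' s - r * f s) * Real.exp (-(r * s))) s := by
    intro s
    have h1 : HasDerivAt (fun s' : ℝ => -(r * s')) (-r) s := by
      have := ((hasDerivAt_id s).const_mul r).neg; simp only [id, mul_one] at this; exact this
    have h2 : HasDerivAt (fun s' : ℝ => Real.exp (-(r * s'))) (Real.exp (-(r*s)) * (-r)) s :=
      by have := (Real.hasDerivAt_exp (-(r*s))).comp s h1; exact this
    have : HasDerivAt g _ s := (hf s).mul h2
    convert this using 1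
    ring
  have mono : AntitoneOn g (Icc 0 t) := by
    apply antitoneOn_of_deriv_nonpos (convex_Icc 0 t)
    · exact (hfc.mul ((Real.continuous_exp.comp (continuous_const.mul continuous_id).neg))).continuousOn
    · intro s hs
      exact (hg' s).differentiableAt.differentiableWithinAt
    · intro s hs
      rw [interior_Icc] at hs
      rw [(hg' s).deriv]
      have h1 : f' s - r * f s ≤ 0 := by
        have := hle s (Ioo_subset_Icc_self hs); linarith
      exact mul_nonpos_of_nonpos_of_nonneg h1 (Real.exp_nonneg _)
  have hgt : g t ≤ g 0 := mono ⟨le_refl 0, ht⟩ ⟨ht, le_refl t⟩ ht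
  have hg0 : g 0 = f 0 := by simp [hg]
  rw [hg0] at hgt
  have hexp : Real.exp (-(r*t)) * Real.exp (r*t) = 1 := by
    rw [← Real.exp_add]; ring_nf; exact Real.exp_zero
  have hft : f t ≤ f 0 * Real.exp (r*t) := by
    have h := mul_le_mul_of_nonneg_right hgt (Real.exp_nonneg (r*t))
    calc f t = f t * Real.exp (-(r*t)) * Real.exp (r*t) := by rw [mul_assoc, hexp, mul_one]
    _ ≤ f 0 * Real.exp (r*t) := h
  rcases le_or_gt (f 0) 0 with h|h
  · exact le_trans (le_trans hft (mul_nonpos_of_nonpos_of_nonneg h (Real.exp_nonneg _)))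
      (le_max_right _ _)
  · have hle1 : Real.exp (r*t) ≤ 1 :=
      Real.exp_le_one_iff.mpr (mul_nonpos_of_nonpos_of_nonneg hr ht)
    calc f t ≤ f 0 * Real.exp (r*t) := hft
    _ ≤ f 0 * 1 := mul_le_mul_of_nonneg_left hle1 (le_of_lt h)
    _ = f 0 := mul_one _
    _ ≤ max (f 0) 0 := le_max_left _ _

/-- One step of integration by parts on `[-1,1]` with vanishing boundary product. -/
lemma ibp_step (F G F' G' : ℝ → ℝ)
    (hF : ∀ x, HasDerivAt F (F' x) x) (hG : ∀ x, HasDerivAt G (G' x) x)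
    (hF'c : Continuous F') (hG'c : Continuous G')
    (h1 : F 1 * G 1 = 0) (h0 : F (-1) * G (-1) = 0) :
    ∫ x in (-1:ℝ)..1, F x * G' x = - ∫ x in (-1:ℝ)..1, F' x * G x := by
  rw [intervalIntegral.integral_mul_deriv_eq_deriv_mul (fun x _ => hF x) (fun x _ => hG x)
      (hF'c.intervalIntegrable _ _) (hG'c.intervalIntegrable _ _), h1, h0]
  ring

lemma hasDerivAt_iteratedDeriv' {f : ℝ → ℝ} {n : WithTop ℕ∞} (hf : ContDiff ℝ n f) (k : ℕ)
    (hk : (k : WithTop ℕ∞) < n) (x : ℝ) :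
    HasDerivAt (iteratedDeriv k f) (iteratedDeriv (k+1) f x) x := by
  rw [iteratedDeriv_succ]
  exact ((hf.differentiable_iteratedDeriv k hk) x).hasDerivAt

lemma ibp2 (f g : ℝ → ℝ) (hf : ContDiff ℝ 2 f) (hg : ContDiff ℝ 2 g)
    (hf0 : f (-1) = 0) (hf1 : f 1 = 0) (hg0 : g (-1) = 0) (hg1 : g 1 = 0) :
    (∫ x in (-1:ℝ)..1, f x * iteratedDeriv 2 g x)
      = ∫ x in (-1:ℝ)..1, iteratedDeriv 2 f x * g x := by
  have hF0 : ∀ x, HasDerivAt f (iteratedDeriv 1 f x) x := fun x => by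
    simpa [iteratedDeriv_zero] using hasDerivAt_iteratedDeriv' hf 0 (by norm_num) x
  have e1 : (∫ x in (-1:ℝ)..1, f x * iteratedDeriv 2 g x)
      = - ∫ x in (-1:ℝ)..1, iteratedDeriv 1 f x * iteratedDeriv 1 g x := by
    exact ibp_step f (iteratedDeriv 1 g) (iteratedDeriv 1 f) (iteratedDeriv 2 g)
      hF0 (hasDerivAt_iteratedDeriv' hg 1 (by norm_num))
      (hf.continuous_iteratedDeriv 1 (by norm_num))
      (hg.continuous_iteratedDeriv 2 (by norm_num))
      (by rw [hf1, zero_mul]) (by rw [hf0, zero_mul])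
  have e2 : (∫ x in (-1:ℝ)..1, iteratedDeriv 1 f x * iteratedDeriv 1 g x)
      = - ∫ x in (-1:ℝ)..1, iteratedDeriv 2 f x * g x := by
    have hG0 : ∀ x, HasDerivAt g (iteratedDeriv 1 g x) x := fun x => by
      simpa [iteratedDeriv_zero] using hasDerivAt_iteratedDeriv' hg 0 (by norm_num) x
    exact ibp_step (iteratedDeriv 1 f) g (iteratedDeriv 2 f) (iteratedDeriv 1 g)
      (hasDerivAt_iteratedDeriv' hf 1 (by norm_num)) hG0
      (hf.continuous_iteratedDeriv 2 (by norm_num))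
      (hg.continuous_iteratedDeriv 1 (by norm_num))
      (by rw [hg1, mul_zero]) (by rw [hg0, mul_zero])
  rw [e1, e2, neg_neg]

lemma ibp4 (f g : ℝ → ℝ) (hf : ContDiff ℝ 4 f) (hg : ContDiff ℝ 4 g)
    (hf0 : f (-1) = 0) (hf1 : f 1 = 0) (hf0' : deriv f (-1) = 0) (hf1' : deriv f 1 = 0)
    (hg0 : g (-1) = 0) (hg1 : g 1 = 0) (hg0' : deriv g (-1) = 0) (hg1' : deriv g 1 = 0) :
    (∫ x in (-1:ℝ)..1, f x * iteratedDeriv 4 g x)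
      = ∫ x in (-1:ℝ)..1, iteratedDeriv 4 f x * g x := by
  have hF0 : ∀ x, HasDerivAt f (iteratedDeriv 1 f x) x := fun x => by
    simpa [iteratedDeriv_zero] using hasDerivAt_iteratedDeriv' hf 0 (by norm_num) x
  have hG0 : ∀ x, HasDerivAt g (iteratedDeriv 1 g x) x := fun x => by
    simpa [iteratedDeriv_zero] using hasDerivAt_iteratedDeriv' hg 0 (by norm_num) x
  have hf1d : iteratedDeriv 1 f 1 = 0 := by rw [iteratedDeriv_one]; exact hf1'
  have hf0d : iteratedDeriv 1 f (-1) = 0 := by rw [iteratedDeriv_one]; exact hf0'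
  have hg1d : iteratedDeriv 1 g 1 = 0 := by rw [iteratedDeriv_one]; exact hg1'
  have hg0d : iteratedDeriv 1 g (-1) = 0 := by rw [iteratedDeriv_one]; exact hg0'
  have e1 : (∫ x in (-1:ℝ)..1, f x * iteratedDeriv 4 g x)
      = - ∫ x in (-1:ℝ)..1, iteratedDeriv 1 f x * iteratedDeriv 3 g x :=
    ibp_step f (iteratedDeriv 3 g) (iteratedDeriv 1 f) (iteratedDeriv 4 g)
      hF0 (hasDerivAt_iteratedDeriv' hg 3 (by norm_num))
      (hf.continuous_iteratedDeriv 1 (by norm_num))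
      (hg.continuous_iteratedDeriv 4 (by norm_num))
      (by rw [hf1, zero_mul]) (by rw [hf0, zero_mul])
  have e2 : (∫ x in (-1:ℝ)..1, iteratedDeriv 1 f x * iteratedDeriv 3 g x)
      = - ∫ x in (-1:ℝ)..1, iteratedDeriv 2 f x * iteratedDeriv 2 g x :=
    ibp_step (iteratedDeriv 1 f) (iteratedDeriv 2 g) (iteratedDeriv 2 f) (iteratedDeriv 3 g)
      (hasDerivAt_iteratedDeriv' hf 1 (by norm_num))
      (hasDerivAt_iteratedDeriv' hg 2 (by norm_num))
      (hf.continuous_iteratedDeriv 2 (by norm_num))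
      (hg.continuous_iteratedDeriv 3 (by norm_num))
      (by rw [hf1d, zero_mul]) (by rw [hf0d, zero_mul])
  have e3 : (∫ x in (-1:ℝ)..1, iteratedDeriv 2 f x * iteratedDeriv 2 g x)
      = - ∫ x in (-1:ℝ)..1, iteratedDeriv 3 f x * iteratedDeriv 1 g x :=
    ibp_step (iteratedDeriv 2 f) (iteratedDeriv 1 g) (iteratedDeriv 3 f) (iteratedDeriv 2 g)
      (hasDerivAt_iteratedDeriv' hf 2 (by norm_num))
      (hasDerivAt_iteratedDeriv' hg 1 (by norm_num))
      (hf.continuous_iteratedDeriv 3 (by norm_num))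
      (hg.continuous_iteratedDeriv 2 (by norm_num))
      (by rw [hg1d, mul_zero]) (by rw [hg0d, mul_zero])
  have e4 : (∫ x in (-1:ℝ)..1, iteratedDeriv 3 f x * iteratedDeriv 1 g x)
      = - ∫ x in (-1:ℝ)..1, iteratedDeriv 4 f x * g x :=
    ibp_step (iteratedDeriv 3 f) g (iteratedDeriv 4 f) (iteratedDeriv 1 g)
      (hasDerivAt_iteratedDeriv' hf 3 (by norm_num)) hG0
      (hf.continuous_iteratedDeriv 4 (by norm_num))
      (hg.continuous_iteratedDeriv 1 (by norm_num))
      (by rw [hg1, mul_zero]) (by rw [hg0, mul_zero])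
  rw [e1, e2, e3, e4]
  ring

set_option maxHeartbeats 1000000 in
/-- Weighted L¹ bound for the hyperbolic (γ > 0) clamped problem with
nonpositive right-hand side `-λ G`, under the smallness condition `γ² ≤ 1/(4μ₁)`;
the bound `c₀` depends only on `γ`, `μ₁`, `ζ₁`, `u⁰` and `u¹`. -/
theorem stmt_3
    (γ μ₁ : ℝ) (ζ₁ : ℝ → ℝ) (u₀ u₁ : ℝ → ℝ)
    (hγ : 0 < γ) (hμ₁ : 0 < μ₁) (hγμ : γ ^ 2 ≤ 1 / (4 * μ₁))
    (hu₀ : ContinuousOn u₀ (Icc (-1 : ℝ) 1))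
    (hu₁ : ContinuousOn u₁ (Icc (-1 : ℝ) 1)) :
    ∃ c₀ : ℝ, 0 ≤ c₀ ∧
      ∀ β τ lam : ℝ, 0 < β → 0 ≤ τ → 0 < lam →
        IsPrincipalEigenpair β τ ζ₁ μ₁ →
        ∀ (T : ℝ≥0∞), 0 < T →
        ∀ u G : ℝ → ℝ → ℝ,
          -- existence of ∂x^k u, k ≤ 4, and of ∂t^j ∂x^k u, j ≤ 2
          (∀ t : ℝ, ContDiff ℝ 4 (u t)) →
          (∀ k ≤ 4, ∀ x : ℝ, ContDiff ℝ 2 fun s => iteratedDeriv k (u s) x) →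
          -- joint continuity of ∂t^j ∂x^k u, j ≤ 2, k ≤ 4
          (∀ j ≤ 2, ∀ k ≤ 4, Continuous fun p : ℝ × ℝ =>
            iteratedDeriv j (fun s => iteratedDeriv k (u s) p.2) p.1) →
          -- initial conditions
          (∀ x ∈ Icc (-1 : ℝ) 1, u 0 x = u₀ x) →
          (∀ x ∈ Icc (-1 : ℝ) 1, deriv (fun s => u s x) 0 = u₁ x) →
          -- clamped boundary conditions
          (∀ t : ℝ, 0 ≤ t → ENNReal.ofReal t < T →
            u t (-1) = 0 ∧ u t 1 = 0 ∧ deriv (u t) (-1) = 0 ∧ deriv (u t) 1 = 0) →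
          -- u stays above -1
          (∀ t : ℝ, 0 ≤ t → ENNReal.ofReal t < T → ∀ x ∈ Icc (-1 : ℝ) 1, -1 < u t x) →
          -- G continuous and nonnegative
          (Continuous fun p : ℝ × ℝ => G p.1 p.2) →
          (∀ t : ℝ, 0 ≤ t → ENNReal.ofReal t < T → ∀ x ∈ Ioo (-1 : ℝ) 1, 0 ≤ G t x) →
          -- the evolution equation γ² ∂t² u + ∂t u + β ∂x⁴ u - τ ∂x² u = -λ G
          (∀ t : ℝ, 0 ≤ t → ENNReal.ofReal t < T → ∀ x ∈ Ioo (-1 : ℝ) 1,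
            γ ^ 2 * iteratedDeriv 2 (fun s => u s x) t + deriv (fun s => u s x) t
              + β * iteratedDeriv 4 (u t) x - τ * iteratedDeriv 2 (u t) x
              = - lam * G t x) →
          ∀ t : ℝ, 0 ≤ t → ENNReal.ofReal t < T →
            (∫ x in (-1 : ℝ)..1, ζ₁ x * |u t x|) ≤ c₀ := by
  classical
  have hγ2 : (0:ℝ) < γ ^ 2 := by positivity
  have hγne : γ ≠ 0 := ne_of_gt hγ
  have hD : 0 ≤ 1 - 4 * γ ^ 2 * μ₁ := by
    have h4 : (0:ℝ) < 4 * μ₁ := by linarith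
    have := (le_div_iff₀ h4).mp hγμ
    nlinarith
  set sq : ℝ := Real.sqrt (1 - 4 * γ ^ 2 * μ₁) with hsq_def
  have hs0 : 0 ≤ sq := Real.sqrt_nonneg _
  have hss : sq * sq = 1 - 4 * γ ^ 2 * μ₁ := Real.mul_self_sqrt hD
  have hslt : sq < 1 := by nlinarith [mul_pos hγ2 hμ₁]
  set r₁ : ℝ := (-1 - sq) / (2 * γ ^ 2) with hr₁_def
  set r₂ : ℝ := (-1 + sq) / (2 * γ ^ 2) with hr₂_def
  have hr₂neg : r₂ < 0 := div_neg_of_neg_of_pos (by linarith) (by positivity)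
  have hr₂ne : r₂ ≠ 0 := ne_of_lt hr₂neg
  have hr₁neg : r₁ ≤ 0 := le_of_lt (div_neg_of_neg_of_pos (by linarith) (by positivity))
  have e1 : γ ^ 2 * (r₁ + r₂) = -1 := by rw [hr₁_def, hr₂_def]; field_simp; ring
  have e2 : γ ^ 2 * (r₁ * r₂) = μ₁ := by
    rw [hr₁_def, hr₂_def, div_mul_div_comm,
      show (-1 - sq) * (-1 + sq) = 1 - sq * sq by ring, hss]
    field_simp
    ring
  set A : ℝ := ∫ x in (-1:ℝ)..1, ζ₁ x * u₀ x with hA_def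
  set B : ℝ := ∫ x in (-1:ℝ)..1, ζ₁ x * u₁ x with hB_def
  set M : ℝ := max (B - r₂ * A) 0 with hM_def
  set K : ℝ := M / (-r₂) with hK_def
  have hM0 : 0 ≤ M := le_max_right _ _
  have hK0 : 0 ≤ K := div_nonneg hM0 (by linarith)
  have hrK : r₂ * K = -M := by
    rw [hK_def]
    field_simp
  refine ⟨|A| + K + 2, by linarith only [abs_nonneg A, hK0], ?_⟩
  intro β τ lam hβ hτ hlam hEig T hT u G hu4 hk2 hjoint hinit0 hinit1 hbc hlow hGc hGnn
    hpde t ht htT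
  obtain ⟨hμpos, hζ4, hζm1, hζp1, hζ'm1, hζ'p1, hζpos, hζint, hζeq⟩ := hEig
  have hζc : Continuous ζ₁ := hζ4.continuous
  have hζnn : ∀ x ∈ Icc (-1:ℝ) 1, 0 ≤ ζ₁ x := by
    intro x hx
    rcases hx.1.eq_or_lt with h | h
    · rw [← h, hζm1]
    rcases hx.2.eq_or_lt with h2 | h2
    · rw [h2, hζp1]
    · exact le_of_lt (hζpos x ⟨h, h2⟩)
  have hk0 : ∀ x : ℝ, ContDiff ℝ 2 fun s => u s x := by
    intro x; have := hk2 0 (by norm_num) x; simpa [iteratedDeriv_zero] using this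
  set ut : ℝ → ℝ → ℝ := fun s x => deriv (fun s' => u s' x) s with hut_def
  set utt : ℝ → ℝ → ℝ := fun s x => deriv (fun s' => ut s' x) s with hutt_def
  have hud : ∀ s x, HasDerivAt (fun s' => u s' x) (ut s x) s := fun s x =>
    (((hk0 x).differentiable (by norm_num)) s).hasDerivAt
  have hutd : ∀ s x, HasDerivAt (fun s' => ut s' x) (utt s x) s := by
    intro s x
    have h1 : Differentiable ℝ (iteratedDeriv 1 fun s => u s x) :=
      (hk0 x).differentiable_iteratedDeriv 1 (by norm_num)
    rw [iteratedDeriv_one] at h1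
    exact (h1 s).hasDerivAt
  have hcu : Continuous fun p : ℝ × ℝ => u p.1 p.2 := by
    have := hjoint 0 (by norm_num) 0 (by norm_num)
    simpa [iteratedDeriv_zero] using this
  have hcut : Continuous fun p : ℝ × ℝ => ut p.1 p.2 := by
    have := hjoint 1 (by norm_num) 0 (by norm_num)
    simpa [iteratedDeriv_zero, iteratedDeriv_one, hut_def] using this
  have hcutt : Continuous fun p : ℝ × ℝ => utt p.1 p.2 := by
    have := hjoint 2 (by norm_num) 0 (by norm_num)
    have h2e : ∀ f : ℝ → ℝ, iteratedDeriv 2 f = deriv (deriv f) := by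
      intro f; rw [iteratedDeriv_succ, iteratedDeriv_one]
    simpa [iteratedDeriv_zero, h2e, hutt_def, hut_def] using this
  have h2d : ∀ (x s : ℝ), iteratedDeriv 2 (fun s' => u s' x) s = utt s x := by
    intro x s; rw [iteratedDeriv_succ, iteratedDeriv_one]
  set X : ℝ → ℝ := fun s => ∫ x in (-1:ℝ)..1, ζ₁ x * u s x with hX_def
  set XD : ℝ → ℝ := fun s => ∫ x in (-1:ℝ)..1, ζ₁ x * ut s x with hXD_def
  set XDD : ℝ → ℝ := fun s => ∫ x in (-1:ℝ)..1, ζ₁ x * utt s x with hXDD_def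
  have hXd : ∀ s, HasDerivAt X (XD s) s := fun s =>
    param_hasDerivAt (fun s x => ζ₁ x * u s x) (fun s x => ζ₁ x * ut s x) (-1) 1
      ((hζc.comp continuous_snd).mul hcu) ((hζc.comp continuous_snd).mul hcut)
      (fun s x => HasDerivAt.const_mul (ζ₁ x) (hud s x)) s
  have hXDd : ∀ s, HasDerivAt XD (XDD s) s := fun s =>
    param_hasDerivAt (fun s x => ζ₁ x * ut s x) (fun s x => ζ₁ x * utt s x) (-1) 1
      ((hζc.comp continuous_snd).mul hcut) ((hζc.comp continuous_snd).mul hcutt)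
      (fun s x => HasDerivAt.const_mul (ζ₁ x) (hutd s x)) s
  have hIcc : uIcc (-1:ℝ) 1 = Icc (-1:ℝ) 1 := uIcc_of_le (by norm_num)
  have hX0 : X 0 = A := by
    rw [hX_def, hA_def]
    exact intervalIntegral.integral_congr (by
      rw [hIcc]; intro x hx
      show ζ₁ x * u 0 x = ζ₁ x * u₀ x
      rw [hinit0 x hx])
  have hXD0 : XD 0 = B := by
    rw [hXD_def, hB_def]
    exact intervalIntegral.integral_congr (by
      rw [hIcc]; intro x hx
      show ζ₁ x * ut 0 x = ζ₁ x * u₁ x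
      rw [show ut 0 x = u₁ x from hinit1 x hx])
  -- the differential inequality for X
  have hODE : ∀ s, 0 ≤ s → s ≤ t → γ ^ 2 * XDD s + XD s + μ₁ * X s ≤ 0 := by
    intro s hs0' hst
    have hsT : ENNReal.ofReal s < T := lt_of_le_of_lt (ENNReal.ofReal_le_ofReal hst) htT
    obtain ⟨hb1, hb2, hb3, hb4⟩ := hbc s hs0' hsT
    have hus4 := hu4 s
    have hcux : Continuous (u s) := hus4.continuous
    have hcutx : Continuous fun x => ut s x := hcut.comp (continuous_const.prodMk continuous_id)
    have hcuttx : Continuous fun x => utt s x :=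
      hcutt.comp (continuous_const.prodMk continuous_id)
    have hcGx : Continuous fun x => G s x := hGc.comp (continuous_const.prodMk continuous_id)
    have hc4 : Continuous (iteratedDeriv 4 (u s)) := hus4.continuous_iteratedDeriv 4 (by norm_num)
    have hc2 : Continuous (iteratedDeriv 2 (u s)) := hus4.continuous_iteratedDeriv 2 (by norm_num)
    have hEqIoo : EqOn (fun x => ζ₁ x * (γ ^ 2 * utt s x + ut s x))
        (fun x => ζ₁ x * (-lam * G s x)
          - ζ₁ x * (β * iteratedDeriv 4 (u s) x - τ * iteratedDeriv 2 (u s) x))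
        (Ioo (-1:ℝ) 1) := by
      intro x hx
      have hp := hpde s hs0' hsT x hx
      rw [h2d x s, show deriv (fun s' => u s' x) s = ut s x from rfl] at hp
      simp only
      linear_combination (ζ₁ x) * hp
    have hEq : EqOn (fun x => ζ₁ x * (γ ^ 2 * utt s x + ut s x))
        (fun x => ζ₁ x * (-lam * G s x)
          - ζ₁ x * (β * iteratedDeriv 4 (u s) x - τ * iteratedDeriv 2 (u s) x))
        (Icc (-1:ℝ) 1) := by
      have := hEqIoo.closure
        (hζc.mul ((continuous_const.mul hcuttx).add hcutx))
        ((hζc.mul (continuous_const.mul hcGx)).sub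
          (hζc.mul ((continuous_const.mul hc4).sub (continuous_const.mul hc2))))
      rwa [closure_Ioo (by norm_num : (-1:ℝ) ≠ 1)] at this
    have hInt : (∫ x in (-1:ℝ)..1, ζ₁ x * (γ ^ 2 * utt s x + ut s x))
        = ∫ x in (-1:ℝ)..1, (ζ₁ x * (-lam * G s x)
          - ζ₁ x * (β * iteratedDeriv 4 (u s) x - τ * iteratedDeriv 2 (u s) x)) :=
      intervalIntegral.integral_congr (by rw [hIcc]; exact hEq)
    have hL : (∫ x in (-1:ℝ)..1, ζ₁ x * (γ ^ 2 * utt s x + ut s x))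
        = γ ^ 2 * XDD s + XD s := by
      have hrw : (fun x => ζ₁ x * (γ ^ 2 * utt s x + ut s x))
          = fun x => γ ^ 2 * (ζ₁ x * utt s x) + ζ₁ x * ut s x := by funext x; ring
      rw [hrw, intervalIntegral.integral_add (f := fun x => γ ^ 2 * (ζ₁ x * utt s x))
        (g := fun x => ζ₁ x * ut s x)
        ((continuous_const.mul (hζc.mul hcuttx)).intervalIntegrable _ _)
        ((hζc.mul hcutx).intervalIntegrable _ _),
        intervalIntegral.integral_const_mul]
    have hR : (∫ x in (-1:ℝ)..1, (ζ₁ x * (-lam * G s x)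
          - ζ₁ x * (β * iteratedDeriv 4 (u s) x - τ * iteratedDeriv 2 (u s) x)))
        = -lam * (∫ x in (-1:ℝ)..1, ζ₁ x * G s x)
          - (β * (∫ x in (-1:ℝ)..1, ζ₁ x * iteratedDeriv 4 (u s) x)
            - τ * (∫ x in (-1:ℝ)..1, ζ₁ x * iteratedDeriv 2 (u s) x)) := by
      have hrw : (fun x => ζ₁ x * (-lam * G s x)
          - ζ₁ x * (β * iteratedDeriv 4 (u s) x - τ * iteratedDeriv 2 (u s) x))
          = fun x => -lam * (ζ₁ x * G s x)
            - (β * (ζ₁ x * iteratedDeriv 4 (u s) x) - τ * (ζ₁ x * iteratedDeriv 2 (u s) x)) := by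
        funext x; ring
      rw [hrw, intervalIntegral.integral_sub (f := fun x => -lam * (ζ₁ x * G s x))
        (g := fun x => β * (ζ₁ x * iteratedDeriv 4 (u s) x) - τ * (ζ₁ x * iteratedDeriv 2 (u s) x))
        ((continuous_const.mul (hζc.mul hcGx)).intervalIntegrable _ _)
        (((continuous_const.mul (hζc.mul hc4)).sub
          (continuous_const.mul (hζc.mul hc2))).intervalIntegrable _ _),
        intervalIntegral.integral_sub (f := fun x => β * (ζ₁ x * iteratedDeriv 4 (u s) x))
        (g := fun x => τ * (ζ₁ x * iteratedDeriv 2 (u s) x))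
        ((continuous_const.mul (hζc.mul hc4)).intervalIntegrable _ _)
        ((continuous_const.mul (hζc.mul hc2)).intervalIntegrable _ _),
        intervalIntegral.integral_const_mul, intervalIntegral.integral_const_mul,
        intervalIntegral.integral_const_mul]
    have hI4 : (∫ x in (-1:ℝ)..1, ζ₁ x * iteratedDeriv 4 (u s) x)
        = ∫ x in (-1:ℝ)..1, iteratedDeriv 4 ζ₁ x * u s x :=
      ibp4 ζ₁ (u s) hζ4 hus4 hζm1 hζp1 hζ'm1 hζ'p1 hb1 hb2 hb3 hb4
    have hI2 : (∫ x in (-1:ℝ)..1, ζ₁ x * iteratedDeriv 2 (u s) x)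
        = ∫ x in (-1:ℝ)..1, iteratedDeriv 2 ζ₁ x * u s x :=
      ibp2 ζ₁ (u s) (hζ4.of_le (by norm_num)) (hus4.of_le (by norm_num)) hζm1 hζp1 hb1 hb2
    have hcz4 : Continuous (iteratedDeriv 4 ζ₁) := hζ4.continuous_iteratedDeriv 4 (by norm_num)
    have hcz2 : Continuous (iteratedDeriv 2 ζ₁) := hζ4.continuous_iteratedDeriv 2 (by norm_num)
    have hEig2 : β * (∫ x in (-1:ℝ)..1, ζ₁ x * iteratedDeriv 4 (u s) x)
        - τ * (∫ x in (-1:ℝ)..1, ζ₁ x * iteratedDeriv 2 (u s) x) = μ₁ * X s := by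
      rw [hI4, hI2]
      have hlin : β * (∫ x in (-1:ℝ)..1, iteratedDeriv 4 ζ₁ x * u s x)
          - τ * (∫ x in (-1:ℝ)..1, iteratedDeriv 2 ζ₁ x * u s x)
          = ∫ x in (-1:ℝ)..1, (β * iteratedDeriv 4 ζ₁ x - τ * iteratedDeriv 2 ζ₁ x) * u s x := by
        rw [← intervalIntegral.integral_const_mul, ← intervalIntegral.integral_const_mul,
          ← intervalIntegral.integral_sub (f := fun x => β * (iteratedDeriv 4 ζ₁ x * u s x))
            (g := fun x => τ * (iteratedDeriv 2 ζ₁ x * u s x))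
            ((continuous_const.mul (hcz4.mul hcux)).intervalIntegrable _ _)
            ((continuous_const.mul (hcz2.mul hcux)).intervalIntegrable _ _)]
        congr 1; funext x; ring
      rw [hlin]
      have hEqz : EqOn (fun x => (β * iteratedDeriv 4 ζ₁ x - τ * iteratedDeriv 2 ζ₁ x) * u s x)
          (fun x => μ₁ * (ζ₁ x * u s x)) (Icc (-1:ℝ) 1) := by
        have hIoo : EqOn (fun x => (β * iteratedDeriv 4 ζ₁ x - τ * iteratedDeriv 2 ζ₁ x) * u s x)
            (fun x => μ₁ * (ζ₁ x * u s x)) (Ioo (-1:ℝ) 1) := by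
          intro x hx
          simp only
          rw [hζeq x hx]; ring
        have := hIoo.closure
          (((continuous_const.mul hcz4).sub (continuous_const.mul hcz2)).mul hcux)
          (continuous_const.mul (hζc.mul hcux))
        rwa [closure_Ioo (by norm_num : (-1:ℝ) ≠ 1)] at this
      rw [intervalIntegral.integral_congr (by rw [hIcc]; exact hEqz),
        intervalIntegral.integral_const_mul, hX_def]
    have hIG : 0 ≤ ∫ x in (-1:ℝ)..1, ζ₁ x * G s x := by
      apply intervalIntegral.integral_nonneg (by norm_num)
      intro x hx
      rcases hx.1.eq_or_lt with h | h
      · rw [← h, hζm1, zero_mul]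
      rcases hx.2.eq_or_lt with h2 | h2
      · rw [h2, hζp1, zero_mul]
      · exact mul_nonneg (hζnn x hx) (hGnn s hs0' hsT x ⟨h, h2⟩)
    have hfin : γ ^ 2 * XDD s + XD s
        = -lam * (∫ x in (-1:ℝ)..1, ζ₁ x * G s x) - μ₁ * X s := by
      rw [← hL, hInt, hR, hEig2]
    linarith only [hfin, mul_nonneg (le_of_lt hlam) hIG]
  -- first comparison: Z := XD - r₂ X
  have hZle : ∀ s ∈ Icc (0:ℝ) t, XDD s - r₂ * XD s ≤ r₁ * (XD s - r₂ * X s) := by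
    intro s hs
    have hO := hODE s hs.1 hs.2
    have hq : γ ^ 2 * ((XDD s - r₂ * XD s) - r₁ * (XD s - r₂ * X s))
        = γ ^ 2 * XDD s + XD s + μ₁ * X s := by
      linear_combination (-(XD s)) * e1 + (X s) * e2
    have hw : γ ^ 2 * ((XDD s - r₂ * XD s) - r₁ * (XD s - r₂ * X s)) ≤ γ ^ 2 * 0 := by
      rw [mul_zero, hq]; exact hO
    have := le_of_mul_le_mul_left hw hγ2
    linarith only [this]
  have hZ : ∀ s ∈ Icc (0:ℝ) t, XD s - r₂ * X s ≤ M := by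
    intro s hs
    have hZd : ∀ s', HasDerivAt (fun s'' => XD s'' - r₂ * X s'') (XDD s' - r₂ * XD s') s' :=
      fun s' => (hXDd s').sub (HasDerivAt.const_mul r₂ (hXd s'))
    have hdec := decay_bound r₁ hr₁neg (fun s' => XD s' - r₂ * X s')
      (fun s' => XDD s' - r₂ * XD s') s hs.1 hZd
      (fun s' hs' => hZle s' ⟨hs'.1, le_trans hs'.2 hs.2⟩)
    have hdec' : XD s - r₂ * X s ≤ max (XD 0 - r₂ * X 0) 0 := hdec
    rw [hX0, hXD0] at hdec'
    exact hdec'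
  -- second comparison: X - K
  have hXt : X t ≤ |A| + K := by
    have hfd : ∀ s, HasDerivAt (fun s' => X s' - K) (XD s) s := fun s => (hXd s).sub_const K
    have hdec := decay_bound r₂ (le_of_lt hr₂neg) (fun s' => X s' - K) XD t ht hfd ?_
    · have hdec' : X t - K ≤ max (X 0 - K) 0 := hdec
      have h2 : max (X 0 - K) 0 ≤ |A| := by
        rw [hX0]
        exact max_le (by linarith only [le_abs_self A, hK0]) (abs_nonneg A)
      linarith only [hdec', h2]
    · intro s hs
      have h1 := hZ s hs
      have h3 : r₂ * (X s - K) = r₂ * X s + M := by rw [mul_sub, hrK]; ring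
      show XD s ≤ r₂ * (X s - K)
      linarith only [h1, h3]
  -- conclude
  have hcuT : Continuous (u t) := (hu4 t).continuous
  have key : (∫ x in (-1:ℝ)..1, ζ₁ x * |u t x|) ≤ X t + 2 := by
    have h1 : (∫ x in (-1:ℝ)..1, ζ₁ x * |u t x|)
        ≤ ∫ x in (-1:ℝ)..1, (ζ₁ x * u t x + 2 * ζ₁ x) := by
      apply intervalIntegral.integral_mono_on (by norm_num)
        ((hζc.mul hcuT.abs).intervalIntegrable _ _)
        (((hζc.mul hcuT).add (continuous_const.mul hζc)).intervalIntegrable _ _)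
      intro x hx
      show ζ₁ x * |u t x| ≤ ζ₁ x * u t x + 2 * ζ₁ x
      have hl := hlow t ht htT x hx
      have hz := hζnn x hx
      have habs : |u t x| ≤ u t x + 2 := by
        rcases abs_cases (u t x) with ⟨h, _⟩ | ⟨h, _⟩ <;> linarith only [h, hl]
      have hm := mul_le_mul_of_nonneg_left habs hz
      linarith only [hm]
    have h2 : (∫ x in (-1:ℝ)..1, (ζ₁ x * u t x + 2 * ζ₁ x)) = X t + 2 := by
      rw [intervalIntegral.integral_add (f := fun x => ζ₁ x * u t x) (g := fun x => 2 * ζ₁ x) ((hζc.mul hcuT).intervalIntegrable _ _)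
        ((continuous_const.mul hζc).intervalIntegrable _ _),
        intervalIntegral.integral_const_mul, hζint, hX_def]
      ring
    linarith only [h1, h2]
  linarith only [hXt, key]
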